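/- Gauss's summation theorem: for Re(c − a − b) > 0 and c not a nonpositive integer, ₂F₁(a, b; c; 1) = Γ(c) Γ(c − a − b) / ( Γ(c − a) Γ(c − b) ). -/

import Mathlib

open Real

/-- The Gauss hypergeometric function `₂F₁(a, b; c; z)`, defined by its power
series (interpreted as a `tsum`). -/
noncomputable def hyp2F1 (a b c z : ℝ) : ℝ :=
  ∑' n : ℕ, ((ascPochhammer ℝ n).eval a * (ascPochhammer ℝ n).eval b /
    (ascPochhammer ℝ n).eval c) * z ^ n / (n.factorial : ℝ)

open Real Filter Finset Topology

open Real Filter Finset Topology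

namespace GaussAux

/-- `(x)_n` as a product. -/
noncomputable def P (x : ℝ) (n : ℕ) : ℝ := ∏ j ∈ Finset.range n, (x + j)

lemma P_eval (x : ℝ) (n : ℕ) : (ascPochhammer ℝ n).eval x = P x n := by
  induction n with
  | zero => simp [P]
  | succ n ih => rw [ascPochhammer_succ_eval, ih, P, P, Finset.prod_range_succ]

lemma P_zero (x : ℝ) : P x 0 = 1 := by simp [P]

lemma P_succ (x : ℝ) (n : ℕ) : P x (n + 1) = P x n * (x + n) := Finset.prod_range_succ _ _

lemma P_succ' (x : ℝ) (n : ℕ) : P x (n + 1) = x * P (x + 1) n := by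
  simp only [P, Finset.prod_range_succ']
  push_cast
  rw [add_zero, mul_comm]
  congr 1
  exact Finset.prod_congr rfl fun j _ => by ring

lemma P_pos {x : ℝ} (hx : 0 < x) (n : ℕ) : 0 < P x n :=
  Finset.prod_pos fun j _ => by positivity

lemma P_ne_zero {x : ℝ} (hx : ∀ m : ℕ, x ≠ -m) (n : ℕ) : P x n ≠ 0 := by
  refine Finset.prod_ne_zero_iff.2 fun j _ => ?_
  intro hj
  exact hx j (by linarith)

lemma P_one (n : ℕ) : P 1 n = n.factorial := by
  rw [← P_eval]; exact ascPochhammer_eval_one ℝ n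

lemma abs_P_le {x A : ℝ} (hA : |x| ≤ A) (n : ℕ) : |P x n| ≤ P A n := by
  rw [P, Finset.abs_prod]
  refine Finset.prod_le_prod (fun j _ => abs_nonneg _) fun j _ => ?_
  calc |x + (j : ℝ)| ≤ |x| + j := by
        refine (abs_add_le _ _).trans ?_
        simp [Nat.abs_cast]
      _ ≤ A + j := by linarith

lemma P_mono {x y : ℝ} (hx : 0 < x) (hxy : x ≤ y) (n : ℕ) : P x n ≤ P y n :=
  Finset.prod_le_prod (fun j _ => by positivity) fun j _ => by linarith

lemma le_P_succ {x : ℝ} (hx : 1 ≤ x) (n : ℕ) : x ≤ P x (n + 1) := by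
  rw [P_succ']
  nth_rewrite 1 [← mul_one x]
  refine mul_le_mul_of_nonneg_left ?_ (by linarith)
  simp only [P]
  calc (1:ℝ) = ∏ _j ∈ Finset.range n, (1:ℝ) := by simp
    _ ≤ ∏ j ∈ Finset.range n, (x + 1 + (j:ℝ)) := by
        refine Finset.prod_le_prod (fun j _ => zero_le_one) fun j _ => ?_
        have : (0:ℝ) ≤ j := Nat.cast_nonneg j
        linarith

end GaussAux

namespace GaussAux

lemma tendsto_ratio_add (x y : ℝ) :
    Tendsto (fun n : ℕ => (x + n) / (y + n)) atTop (𝓝 1) := by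
  have h1 : Tendsto (fun n : ℕ => (n : ℝ)⁻¹) atTop (𝓝 0) :=
    tendsto_inv_atTop_nhds_zero_nat
  have h2 : Tendsto (fun n : ℕ => (x * (n : ℝ)⁻¹ + 1) / (y * (n : ℝ)⁻¹ + 1)) atTop
      (𝓝 ((x * 0 + 1) / (y * 0 + 1))) := by
    refine Filter.Tendsto.div (((h1.const_mul x)).add tendsto_const_nhds)
      (((h1.const_mul y)).add tendsto_const_nhds) (by norm_num)
  have h3 : ((x * 0 + 1) / (y * 0 + 1) : ℝ) = 1 := by norm_num
  rw [h3] at h2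
  refine h2.congr' ?_
  filter_upwards [eventually_ge_atTop (⌈|y|⌉₊ + 1)] with n hn
  have hn1 : (1:ℝ) ≤ (n:ℝ) := by
    have : (1:ℕ) ≤ n := le_trans (Nat.le_add_left 1 _) hn
    exact_mod_cast this
  have hny : |y| < (n:ℝ) := by
    have h4 : (⌈|y|⌉₊ : ℝ) < n := by
      have : ⌈|y|⌉₊ < n := lt_of_lt_of_le (Nat.lt_succ_self _) hn
      exact_mod_cast this
    exact lt_of_le_of_lt (Nat.le_ceil _) h4
  have hyn : y + (n:ℝ) ≠ 0 := by
    have := abs_lt.1 hny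
    linarith [this.1]
  have hn0 : (n:ℝ) ≠ 0 := by linarith
  field_simp

lemma GammaSeq_eq (x : ℝ) (n : ℕ) :
    Real.GammaSeq x n = (n:ℝ) ^ x * n.factorial / (P x n * (x + n)) := by
  rw [Real.GammaSeq, ← P_succ]
  rfl

lemma GammaSeq_ne_zero {x : ℝ} (hx : ∀ m : ℕ, x ≠ -m) {n : ℕ} (hn : 1 ≤ n) :
    Real.GammaSeq x n ≠ 0 := by
  rw [GammaSeq_eq]
  have hnpos : (0:ℝ) < n := by exact_mod_cast hn
  refine div_ne_zero (mul_ne_zero (Real.rpow_pos_of_pos hnpos x).ne' ?_)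
    (mul_ne_zero (P_ne_zero hx n) ?_)
  · exact_mod_cast n.factorial_ne_zero
  · intro h; exact hx n (by linarith)

lemma P_formula {x : ℝ} (hx : ∀ m : ℕ, x ≠ -m) {n : ℕ} (hn : 1 ≤ n) :
    P x n = (n:ℝ) ^ x * n.factorial / (Real.GammaSeq x n * (x + n)) := by
  have h1 := GammaSeq_eq x n
  have hG := GammaSeq_ne_zero hx hn
  have hP := P_ne_zero hx n
  have hxn : x + (n:ℝ) ≠ 0 := fun h => hx n (by linarith)
  field_simp at h1 ⊢
  linarith [h1]

lemma P_inv_formula {x : ℝ} (hx : ∀ m : ℕ, x ≠ -m) {n : ℕ} (hn : 1 ≤ n) :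
    (P x n)⁻¹ = Real.GammaSeq x n * (x + n) / ((n:ℝ) ^ x * n.factorial) := by
  rw [GammaSeq_eq]
  have hnpos : (0:ℝ) < n := by exact_mod_cast hn
  have hP := P_ne_zero hx n
  have hxn : x + (n:ℝ) ≠ 0 := fun h => hx n (by linarith)
  have hr : ((n:ℝ) ^ x) ≠ 0 := (Real.rpow_pos_of_pos hnpos x).ne'
  have hf : (n.factorial : ℝ) ≠ 0 := by exact_mod_cast n.factorial_ne_zero
  field_simp

lemma tendsto_P_ratio {x y z w : ℝ} (hx : ∀ m : ℕ, x ≠ -(m:ℝ)) (hy : ∀ m : ℕ, y ≠ -(m:ℝ))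
    (hz : ∀ m : ℕ, z ≠ -(m:ℝ)) (hw : ∀ m : ℕ, w ≠ -(m:ℝ)) :
    Tendsto (fun n : ℕ => P x n * P y n / (P z n * P w n) * (n:ℝ) ^ (z + w - x - y))
      atTop (𝓝 (Real.Gamma z * Real.Gamma w / (Real.Gamma x * Real.Gamma y))) := by
  have hlim : Tendsto (fun n : ℕ =>
      Real.GammaSeq z n * Real.GammaSeq w n / (Real.GammaSeq x n * Real.GammaSeq y n)
        * ((z + n) / (x + n)) * ((w + n) / (y + n))) atTop
      (𝓝 (Real.Gamma z * Real.Gamma w / (Real.Gamma x * Real.Gamma y) * 1 * 1)) := by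
    refine (Filter.Tendsto.mul (Filter.Tendsto.mul ?_ (tendsto_ratio_add z x))
      (tendsto_ratio_add w y))
    exact ((Real.GammaSeq_tendsto_Gamma z).mul (Real.GammaSeq_tendsto_Gamma w)).div
      ((Real.GammaSeq_tendsto_Gamma x).mul (Real.GammaSeq_tendsto_Gamma y))
      (mul_ne_zero (Real.Gamma_ne_zero hx) (Real.Gamma_ne_zero hy))
  rw [mul_one, mul_one] at hlim
  refine hlim.congr' ?_
  filter_upwards [eventually_ge_atTop 1] with n hn
  have hnpos : (0:ℝ) < n := by exact_mod_cast hn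
  have hfx := P_formula hx hn
  have hfy := P_formula hy hn
  have hix := P_inv_formula hz hn
  have hiw := P_inv_formula hw hn
  have hGx := GammaSeq_ne_zero hx hn
  have hGy := GammaSeq_ne_zero hy hn
  have hGz := GammaSeq_ne_zero hz hn
  have hGw := GammaSeq_ne_zero hw hn
  have hxn : x + (n:ℝ) ≠ 0 := fun h => hx n (by linarith)
  have hyn : y + (n:ℝ) ≠ 0 := fun h => hy n (by linarith)
  have hzn : z + (n:ℝ) ≠ 0 := fun h => hz n (by linarith)
  have hwn : w + (n:ℝ) ≠ 0 := fun h => hw n (by linarith)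
  have hf : (n.factorial : ℝ) ≠ 0 := by exact_mod_cast n.factorial_ne_zero
  have hrx : ((n:ℝ) ^ x) ≠ 0 := (Real.rpow_pos_of_pos hnpos x).ne'
  have hry : ((n:ℝ) ^ y) ≠ 0 := (Real.rpow_pos_of_pos hnpos y).ne'
  have hrz : ((n:ℝ) ^ z) ≠ 0 := (Real.rpow_pos_of_pos hnpos z).ne'
  have hrw : ((n:ℝ) ^ w) ≠ 0 := (Real.rpow_pos_of_pos hnpos w).ne'
  have hr : (n:ℝ) ^ x * (n:ℝ) ^ y * (n:ℝ) ^ (z + w - x - y) = (n:ℝ) ^ z * (n:ℝ) ^ w := by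
    rw [← Real.rpow_add hnpos, ← Real.rpow_add hnpos, ← Real.rpow_add hnpos]
    congr 1
    ring
  have key : P x n * P y n / (P z n * P w n) * (n:ℝ) ^ (z + w - x - y)
      = (Real.GammaSeq z n * Real.GammaSeq w n / (Real.GammaSeq x n * Real.GammaSeq y n)
        * ((z + n) / (x + n)) * ((w + n) / (y + n)))
        * ((n:ℝ) ^ x * (n:ℝ) ^ y * (n:ℝ) ^ (z + w - x - y) / ((n:ℝ) ^ z * (n:ℝ) ^ w)) := by
    rw [div_eq_mul_inv (P x n * P y n), mul_inv, hfx, hfy, hix, hiw]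
    field_simp
  rw [key, hr, div_self (mul_ne_zero hrz hrw), mul_one]

end GaussAux

namespace GaussAux

/-- The `n`-th term of the hypergeometric series at `z = 1`. -/
noncomputable def t (a b c : ℝ) (n : ℕ) : ℝ := P a n * P b n / (P c n * n.factorial)

lemma t_zero (a b c : ℝ) : t a b c 0 = 1 := by simp [t, P_zero]

lemma one_ne_neg_nat : ∀ m : ℕ, (1:ℝ) ≠ -(m:ℝ) := by
  intro m h
  have : (0:ℝ) ≤ (m:ℝ) := Nat.cast_nonneg m
  linarith

lemma tendsto_t_rpow {a b c : ℝ} (ha : ∀ m : ℕ, a ≠ -(m:ℝ)) (hb : ∀ m : ℕ, b ≠ -(m:ℝ))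
    (hc : ∀ m : ℕ, c ≠ -(m:ℝ)) :
    Tendsto (fun n : ℕ => t a b c n * (n:ℝ) ^ (c + 1 - a - b)) atTop
      (𝓝 (Real.Gamma c * Real.Gamma 1 / (Real.Gamma a * Real.Gamma b))) := by
  have := tendsto_P_ratio ha hb hc one_ne_neg_nat
  refine this.congr fun n => ?_
  rw [t, P_one]

lemma t_eventually_zero {a b c : ℝ} {m : ℕ} (hm : a = -(m:ℝ)) {n : ℕ} (hn : m + 1 ≤ n) :
    t a b c n = 0 := by
  have : P a n = 0 := by
    refine Finset.prod_eq_zero (Finset.mem_range.2 (by omega : m < n)) ?_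
    rw [hm]; ring
  simp [t, this]

lemma t_comm (a b c : ℝ) (n : ℕ) : t a b c n = t b a c n := by
  rw [t, t, mul_comm (P a n)]

lemma summable_t_of_nat {a b c : ℝ} {m : ℕ} (hm : a = -(m:ℝ)) : Summable (t a b c) := by
  refine summable_of_ne_finset_zero (s := Finset.range (m+1)) fun n hn => ?_
  refine t_eventually_zero hm ?_
  simp only [Finset.mem_range] at hn
  omega

lemma summable_t {a b c : ℝ} (hc : ∀ m : ℕ, c ≠ -(m:ℝ)) (h : 0 < c - a - b) :
    Summable (t a b c) := by
  by_cases ha : ∀ m : ℕ, a ≠ -(m:ℝ)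
  · by_cases hb : ∀ m : ℕ, b ≠ -(m:ℝ)
    · -- main case
      set p := c + 1 - a - b with hp_def
      have hp : 1 < p := by rw [hp_def]; linarith
      have hq := tendsto_t_rpow ha hb hc
      have hO1 : (fun n : ℕ => t a b c n * (n:ℝ) ^ p) =O[atTop] (fun _ : ℕ => (1:ℝ)) :=
        hq.isBigO_one ℝ
      have hO2 : (t a b c) =O[atTop] (fun n : ℕ => ((n:ℝ) ^ p)⁻¹) := by
        have heq : (t a b c) =ᶠ[atTop] fun n : ℕ => (t a b c n * (n:ℝ) ^ p) * ((n:ℝ) ^ p)⁻¹ := by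
          filter_upwards [eventually_ge_atTop 1] with n hn
          have hnpos : (0:ℝ) < n := by exact_mod_cast hn
          rw [mul_inv_cancel_right₀ (Real.rpow_pos_of_pos hnpos p).ne']
        refine Asymptotics.IsBigO.congr' (hO1.mul (Asymptotics.isBigO_refl
          (fun n : ℕ => ((n:ℝ) ^ p)⁻¹) atTop)) heq.symm ?_
        filter_upwards with n
        rw [one_mul]
      exact summable_of_isBigO_nat (Real.summable_nat_rpow_inv.2 hp) hO2
    · push_neg at hb
      obtain ⟨m, hm⟩ := hb
      have := summable_t_of_nat (b := a) (c := c) hm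
      exact this.congr fun n => (t_comm a b c n).symm
  · push_neg at ha
    obtain ⟨m, hm⟩ := ha
    exact summable_t_of_nat hm

lemma tendsto_n_mul_t {a b c : ℝ} (hc : ∀ m : ℕ, c ≠ -(m:ℝ)) (h : 0 < c - a - b) :
    Tendsto (fun n : ℕ => (n:ℝ) * t a b c n) atTop (𝓝 0) := by
  have deg : ∀ {x y : ℝ} (m : ℕ), x = -(m:ℝ) →
      Tendsto (fun n : ℕ => (n:ℝ) * t x y c n) atTop (𝓝 0) := by
    intro x y m hm
    refine tendsto_const_nhds.congr' ?_
    filter_upwards [eventually_ge_atTop (m+1)] with n hn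
    rw [t_eventually_zero hm hn, mul_zero]
  by_cases ha : ∀ m : ℕ, a ≠ -(m:ℝ)
  · by_cases hb : ∀ m : ℕ, b ≠ -(m:ℝ)
    · set p := c + 1 - a - b with hp_def
      have hp : 1 < p := by rw [hp_def]; linarith
      have hq := tendsto_t_rpow ha hb hc
      have hpow : Tendsto (fun n : ℕ => (n:ℝ) ^ (1 - p)) atTop (𝓝 0) := by
        have h1 : Tendsto (fun x : ℝ => x ^ (-(p-1))) atTop (𝓝 0) :=
          tendsto_rpow_neg_atTop (by linarith)
        have h2 := h1.comp (tendsto_natCast_atTop_atTop (R := ℝ))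
        refine h2.congr fun n => ?_
        simp only [Function.comp_apply]
        congr 1
        ring
      have := hq.mul hpow
      rw [mul_zero] at this
      refine this.congr' ?_
      filter_upwards [eventually_ge_atTop 1] with n hn
      have hnpos : (0:ℝ) < n := by exact_mod_cast hn
      rw [mul_assoc, ← Real.rpow_add hnpos]
      norm_num
      rw [mul_comm]
      rw [hp_def, show c + 1 - a - b + (1 - (c + 1 - a - b)) = 1 by ring, Real.rpow_one]
    · push_neg at hb
      obtain ⟨m, hm⟩ := hb
      have := deg m hm (y := a)
      refine this.congr fun n => by rw [t_comm]
  · push_neg at ha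
    obtain ⟨m, hm⟩ := ha
    exact deg m hm

end GaussAux

namespace GaussAux

lemma t_c_succ {a b c : ℝ} (n : ℕ) (hc0 : c ≠ 0) (hcn : c + (n:ℝ) ≠ 0) (hPc : P c n ≠ 0) :
    t a b (c+1) n = t a b c n * c / (c + n) := by
  have e1 : c * P (c+1) n = P c n * (c + n) := by rw [← P_succ', P_succ]
  rw [t, t]
  have hP1 : P (c+1) n = P c n * (c + n) / c := by
    rw [eq_div_iff hc0]; linarith [e1]
  rw [hP1]
  have hf : (n.factorial : ℝ) ≠ 0 := by exact_mod_cast n.factorial_ne_zero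
  field_simp

lemma telescope {a b c : ℝ} (n : ℕ) (hc0 : c ≠ 0) (hcn : c + (n:ℝ) ≠ 0) (hPc : P c n ≠ 0)
    (hcab : c - a - b ≠ 0) :
    (c - a - b) * (t a b c n - ((c-a)*(c-b)/(c*(c-a-b))) * t a b (c+1) n)
      = (n:ℝ) * t a b c n - ((n:ℝ)+1) * t a b c (n+1) := by
  rw [t_c_succ n hc0 hcn hPc]
  rw [t, t, P_succ a, P_succ b, P_succ c, Nat.factorial_succ]
  have hf : (n.factorial : ℝ) ≠ 0 := by exact_mod_cast n.factorial_ne_zero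
  have hn1 : ((n:ℝ) + 1) ≠ 0 := by positivity
  push_cast
  field_simp
  ring

lemma S_rec {a b c : ℝ} (hc : ∀ m : ℕ, c ≠ -(m:ℝ)) (h : 0 < c - a - b) :
    ∑' n, t a b c n = ((c-a)*(c-b)/(c*(c-a-b))) * ∑' n, t a b (c+1) n := by
  have hc1 : ∀ m : ℕ, c + 1 ≠ -(m:ℝ) := by
    intro m hm
    exact hc (m+1) (by push_cast; linarith)
  have h1 : 0 < (c+1) - a - b := by linarith
  have hs1 : Summable (t a b c) := summable_t hc h
  have hs2 : Summable (t a b (c+1)) := summable_t hc1 h1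
  have hc0 : c ≠ 0 := by simpa using hc 0
  set K := (c-a)*(c-b)/(c*(c-a-b)) with hK
  set f : ℕ → ℝ := fun n => (c - a - b) * (t a b c n - K * t a b (c+1) n) with hf_def
  have hf_sum : Summable f := ((hs1.sub (hs2.mul_left K)).mul_left (c-a-b))
  set u : ℕ → ℝ := fun k => (k:ℝ) * t a b c k with hu
  have htel : ∀ n : ℕ, f n = u n - u (n+1) := by
    intro n
    have hcn : c + (n:ℝ) ≠ 0 := fun hh => hc n (by linarith)
    have := telescope (a := a) (b := b) n hc0 hcn (P_ne_zero hc n) h.ne'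
    rw [hf_def, hu]
    simp only
    rw [this]
    push_cast
    ring
  have h0 : HasSum f 0 := by
    rw [hf_sum.hasSum_iff_tendsto_nat]
    have hps : ∀ N, ∑ i ∈ Finset.range N, f i = u 0 - u N := by
      intro N
      rw [Finset.sum_congr rfl fun i _ => htel i]
      exact Finset.sum_range_sub' u N
    have hu0 : u 0 = 0 := by simp [hu]
    have hlim : Tendsto (fun N => u 0 - u N) atTop (𝓝 0) := by
      rw [hu0]
      have := (tendsto_n_mul_t hc h).neg
      rw [neg_zero] at this
      refine this.congr fun N => ?_
      simp [hu]
    exact hlim.congr fun N => (hps N).symm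
  have htsum : (c - a - b) * (∑' n, t a b c n - K * ∑' n, t a b (c+1) n) = 0 := by
    rw [← h0.tsum_eq, hf_def]
    rw [tsum_mul_left]
    congr 1
    rw [← tsum_mul_left, ← Summable.tsum_sub hs1 (hs2.mul_left K)]
  have := mul_eq_zero.1 htsum
  rcases this with h' | h'
  · exact absurd h' h.ne'
  · linarith [sub_eq_zero.1 h']

lemma S_iter {a b c : ℝ} (hc : ∀ m : ℕ, c ≠ -(m:ℝ)) (h : 0 < c - a - b) (N : ℕ) :
    ∑' n, t a b c n =
      (∏ k ∈ Finset.range N, ((c+k-a)*(c+k-b)/((c+k)*(c+k-a-b)))) * ∑' n, t a b (c+N) n := by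
  induction N with
  | zero => simp
  | succ N ih =>
    have hcN : ∀ m : ℕ, c + (N:ℝ) ≠ -(m:ℝ) := by
      intro m hm
      exact hc (m+N) (by push_cast; linarith)
    have hN : 0 < (c + N) - a - b := by
      have : (0:ℝ) ≤ N := Nat.cast_nonneg N
      linarith
    rw [ih, S_rec hcN hN, Finset.prod_range_succ]
    push_cast
    rw [show c + ((N:ℝ) + 1) = c + (N:ℝ) + 1 from by ring]
    ring

end GaussAux

namespace GaussAux

lemma tendsto_S_shift {a b c : ℝ} (hc : ∀ m : ℕ, c ≠ -(m:ℝ)) (h : 0 < c - a - b) :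
    Tendsto (fun N : ℕ => ∑' n, t a b (c + N) n) atTop (𝓝 1) := by
  set A : ℝ := max (max |a| |b|) 1 with hA_def
  have hA1 : (1:ℝ) ≤ A := le_max_right _ _
  have haA : |a| ≤ A := le_trans (le_max_left _ _) (le_max_left _ _)
  have hbA : |b| ≤ A := le_trans (le_max_right _ _) (le_max_left _ _)
  obtain ⟨N₀, hN₀⟩ := exists_nat_gt (2*A + 2 - c)
  have hcN₀ : (2:ℝ)*A + 2 < c + N₀ := by linarith
  have hcN₀pos : (0:ℝ) < c + N₀ := by linarith
  have hcN₀1 : (1:ℝ) ≤ c + N₀ := by linarith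
  have hcN₀ne : ∀ m : ℕ, c + (N₀:ℝ) ≠ -(m:ℝ) := by
    intro m hm
    have : (0:ℝ) ≤ (m:ℝ) := Nat.cast_nonneg m
    linarith
  -- the bound
  have hbound_sum : Summable (fun n : ℕ => t A A (c + N₀) (n+1)) := by
    have : Summable (t A A (c + N₀)) := by
      refine summable_t hcN₀ne ?_
      linarith
    exact (summable_nat_add_iff 1).2 this
  have key := tendsto_tsum_of_dominated_convergence (f := fun (N : ℕ) (n : ℕ) => t a b (c + N) (n+1))
    (g := fun _ : ℕ => (0:ℝ)) (𝓕 := atTop) hbound_sum ?_ ?_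
  · have hS : ∀ N : ℕ, ∑' n, t a b (c + N) n = 1 + ∑' n, t a b (c + N) (n+1) := by
      intro N
      have hcN : ∀ m : ℕ, c + (N:ℝ) ≠ -(m:ℝ) := by
        intro m hm
        exact hc (m+N) (by push_cast; linarith)
      have hN : 0 < (c + N) - a - b := by
        have : (0:ℝ) ≤ N := Nat.cast_nonneg N
        linarith
      have hsum := summable_t hcN hN
      rw [Summable.tsum_eq_zero_add hsum, t_zero]
    rw [tsum_zero] at key
    have := (tendsto_const_nhds (x := (1:ℝ)) (f := atTop)).add key
    rw [add_zero] at this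
    exact this.congr fun N => (hS N).symm
  · -- pointwise convergence to 0
    intro n
    have hconst : Tendsto (fun N : ℕ => (P A (n+1) * P A (n+1) / (n+1).factorial) * (c + (N:ℝ))⁻¹)
        atTop (𝓝 0) := by
      have h1 : Tendsto (fun N : ℕ => c + (N:ℝ)) atTop atTop :=
        tendsto_atTop_add_const_left _ c (tendsto_natCast_atTop_atTop (R := ℝ))
      have h2 := h1.inv_tendsto_atTop
      have := h2.const_mul (P A (n+1) * P A (n+1) / (n+1).factorial)
      rwa [mul_zero] at this
    refine squeeze_zero_norm' ?_ hconst
    filter_upwards [eventually_ge_atTop N₀] with N hN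
    have hNr : (N₀:ℝ) ≤ (N:ℝ) := by exact_mod_cast hN
    have hcN1 : (1:ℝ) ≤ c + N := by linarith
    have hcNpos : (0:ℝ) < c + N := by linarith
    have hPden : c + (N:ℝ) ≤ P (c + N) (n+1) := le_P_succ hcN1 n
    have hPdenpos : (0:ℝ) < P (c + N) (n+1) := P_pos hcNpos (n+1)
    have hnum : |P a (n+1) * P b (n+1)| ≤ P A (n+1) * P A (n+1) := by
      rw [abs_mul]
      have h1 := abs_P_le haA (n+1)
      have h2 := abs_P_le hbA (n+1)
      exact mul_le_mul h1 h2 (abs_nonneg _) ((abs_nonneg _).trans h1)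
    have hfpos : (0:ℝ) < ((n+1).factorial : ℝ) := by exact_mod_cast (n+1).factorial_pos
    have hPA : (0:ℝ) < P A (n+1) := P_pos (by linarith) (n+1)
    calc ‖t a b (c+N) (n+1)‖
        = |P a (n+1) * P b (n+1)| / (P (c+N) (n+1) * (n+1).factorial) := by
          rw [t, Real.norm_eq_abs, abs_div,
            abs_of_pos (mul_pos hPdenpos hfpos)]
      _ ≤ P A (n+1) * P A (n+1) / ((c + N) * (n+1).factorial) :=
          div_le_div₀ (mul_nonneg hPA.le hPA.le) hnum (mul_pos hcNpos hfpos)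
            (mul_le_mul_of_nonneg_right hPden hfpos.le)
      _ = (P A (n+1) * P A (n+1) / (n+1).factorial) * (c + (N:ℝ))⁻¹ := by
          rw [div_mul_eq_div_div_swap, div_eq_mul_inv]
  · -- uniform bound
    filter_upwards [eventually_ge_atTop N₀] with N hN n
    have hNr : (N₀:ℝ) ≤ (N:ℝ) := by exact_mod_cast hN
    have hcN1 : (1:ℝ) ≤ c + N := by linarith
    have hcNpos : (0:ℝ) < c + N := by linarith
    have hnum : |P a (n+1) * P b (n+1)| ≤ P A (n+1) * P A (n+1) := by
      rw [abs_mul]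
      have h1 := abs_P_le haA (n+1)
      have h2 := abs_P_le hbA (n+1)
      exact mul_le_mul h1 h2 (abs_nonneg _) ((abs_nonneg _).trans h1)
    have hfpos : (0:ℝ) < ((n+1).factorial : ℝ) := by exact_mod_cast (n+1).factorial_pos
    have hP0pos : (0:ℝ) < P (c + N₀) (n+1) := P_pos hcN₀pos (n+1)
    have hPdenpos : (0:ℝ) < P (c + N) (n+1) := P_pos hcNpos (n+1)
    have hPA : (0:ℝ) < P A (n+1) := P_pos (by linarith) (n+1)
    calc ‖t a b (c+N) (n+1)‖
        = |P a (n+1) * P b (n+1)| / (P (c+N) (n+1) * (n+1).factorial) := by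
          rw [t, Real.norm_eq_abs, abs_div,
            abs_of_pos (mul_pos hPdenpos hfpos)]
      _ ≤ P A (n+1) * P A (n+1) / (P (c + N₀) (n+1) * (n+1).factorial) :=
          div_le_div₀ (mul_nonneg hPA.le hPA.le) hnum (mul_pos hP0pos hfpos)
            (mul_le_mul_of_nonneg_right (P_mono hcN₀pos (by linarith) (n+1)) hfpos.le)
      _ = t A A (c + N₀) (n+1) := by rw [t]

end GaussAux

open GaussAux in
theorem hyp2F1_gauss_sum' (a b c : ℝ) (h : 0 < c - a - b)
    (hc : ∀ n : ℕ, c ≠ -(n : ℝ)) :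
    (∑' n, t a b c n) =
      Real.Gamma c * Real.Gamma (c - a - b) /
        (Real.Gamma (c - a) * Real.Gamma (c - b)) := by
  set S := ∑' n, t a b c n with hS_def
  set Pr : ℕ → ℝ := fun N => ∏ k ∈ Finset.range N, ((c+k-a)*(c+k-b)/((c+k)*(c+k-a-b)))
    with hPr_def
  have hiter : ∀ N : ℕ, S = Pr N * ∑' n, t a b (c+N) n := fun N => S_iter hc h N
  have hone := tendsto_S_shift hc h
  have hPr_tendsto_S : Tendsto Pr atTop (𝓝 S) := by
    have hev : Pr =ᶠ[atTop] fun N : ℕ => S / (∑' n, t a b (c+(N:ℝ)) n) := by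
      filter_upwards [hone.eventually_ne one_ne_zero] with N hN
      rw [eq_div_iff hN]
      exact (hiter N).symm
    have h2 : Tendsto (fun N : ℕ => S / (∑' n, t a b (c+(N:ℝ)) n)) atTop (𝓝 (S / 1)) :=
      tendsto_const_nhds.div hone one_ne_zero
    rw [div_one] at h2
    exact h2.congr' hev.symm
  by_cases hca : ∀ m : ℕ, c - a ≠ -(m:ℝ)
  · by_cases hcb : ∀ m : ℕ, c - b ≠ -(m:ℝ)
    · -- nondegenerate case
      have hcab : ∀ m : ℕ, c - a - b ≠ -(m:ℝ) := by
        intro m hm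
        have : (0:ℝ) ≤ (m:ℝ) := Nat.cast_nonneg m
        linarith
      have hratio := tendsto_P_ratio hca hcb hc hcab
      have hPr_eq : ∀ N : ℕ, Pr N = P (c-a) N * P (c-b) N / (P c N * P (c-a-b) N)
          * (N:ℝ) ^ (c + (c-a-b) - (c-a) - (c-b)) := by
        intro N
        have hz : c + (c-a-b) - (c-a) - (c-b) = 0 := by ring
        rw [hz, Real.rpow_zero, mul_one, hPr_def]
        simp only [P]
        rw [Finset.prod_div_distrib]
        congr 1
        · rw [← Finset.prod_mul_distrib]
          exact Finset.prod_congr rfl fun k _ => by ring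
        · rw [← Finset.prod_mul_distrib]
          exact Finset.prod_congr rfl fun k _ => by ring
      have hratio' : Tendsto Pr atTop
          (𝓝 (Real.Gamma c * Real.Gamma (c-a-b) / (Real.Gamma (c-a) * Real.Gamma (c-b)))) := by
        refine hratio.congr fun N => (hPr_eq N).symm
      exact tendsto_nhds_unique hPr_tendsto_S hratio'
    · -- c - b is a nonpositive integer
      push_neg at hcb
      obtain ⟨m, hm⟩ := hcb
      have hPr0 : Pr (m+1) = 0 := by
        rw [hPr_def]
        refine Finset.prod_eq_zero (Finset.mem_range.2 (Nat.lt_succ_self m)) ?_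
        have : c + (m:ℝ) - b = 0 := by linarith
        rw [this, mul_zero, zero_div]
      have hS0 : S = 0 := by rw [hiter (m+1), hPr0, zero_mul]
      rw [hS0, show c - b = -(m:ℝ) from hm, Real.Gamma_neg_nat_eq_zero, mul_zero, div_zero]
  · -- c - a is a nonpositive integer
    push_neg at hca
    obtain ⟨m, hm⟩ := hca
    have hPr0 : Pr (m+1) = 0 := by
      rw [hPr_def]
      refine Finset.prod_eq_zero (Finset.mem_range.2 (Nat.lt_succ_self m)) ?_
      have : c + (m:ℝ) - a = 0 := by linarith
      rw [this, zero_mul, zero_div]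
    have hS0 : S = 0 := by rw [hiter (m+1), hPr0, zero_mul]
    rw [hS0, show c - a = -(m:ℝ) from hm, Real.Gamma_neg_nat_eq_zero, zero_mul, div_zero]


open GaussAux in
/-- Gauss's summation theorem:
`₂F₁(a, b; c; 1) = Γ(c)Γ(c − a − b)/(Γ(c − a)Γ(c − b))`
for `c − a − b > 0` and `c` not a nonpositive integer. -/
theorem hyp2F1_gauss_sum (a b c : ℝ) (h : 0 < c - a - b)
    (hc : ∀ n : ℕ, c ≠ -(n : ℝ)) :
    hyp2F1 a b c 1 =
      Real.Gamma c * Real.Gamma (c - a - b) /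
        (Real.Gamma (c - a) * Real.Gamma (c - b)) := by
  have hrw : hyp2F1 a b c 1 = ∑' n, t a b c n := by
    rw [hyp2F1]
    exact tsum_congr fun n => by
      rw [P_eval, P_eval, P_eval, t, one_pow, mul_one, div_div]
  rw [hrw]
  exact hyp2F1_gauss_sum' a b c h hc
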